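/- For every ε ∈ (0,1), the Lebesgue measure of {(a,b,s,α) : 0 < b ≤ 1, 0 < α ≤ 1-b, 1-b ≤ a ≤ 1, 0 ≤ s < (a^{-1} - ε(b+α))/b} is at least π²/6 - 1 - ε/3 > π²/6 - 1 - 1/3 > 0. In particular the gap distribution of affine lattices has support at zero: the proportion of gaps less than ε is at least ε/3. -/

import Mathlib

open MeasureTheory Set intervalIntegral
open scoped ENNReal

/-! Auxiliary machinery -/

noncomputable def myperm : ℝ × ℝ × ℝ × ℝ → ℝ × ℝ × ℝ × ℝ :=
  fun q => (q.2.2.1, q.1, q.2.2.2, q.2.1)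

theorem myperm_mp : MeasurePreserving myperm
    (volume : Measure (ℝ × ℝ × ℝ × ℝ)) (volume : Measure (ℝ × ℝ × ℝ × ℝ)) := by
  have h1 : MeasurePreserving
      (Prod.map (id : ℝ → ℝ) ((MeasurableEquiv.prodAssoc : (ℝ × ℝ) × ℝ ≃ᵐ ℝ × ℝ × ℝ) ∘ Prod.swap))
      (((volume : Measure ℝ).prod ((volume : Measure ℝ).prod ((volume : Measure ℝ).prod (volume : Measure ℝ)))))
      (((volume : Measure ℝ).prod ((volume : Measure ℝ).prod ((volume : Measure ℝ).prod (volume : Measure ℝ))))) :=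
    (MeasurePreserving.id _).prod
      ((measurePreserving_prodAssoc _ _ _).comp Measure.measurePreserving_swap)
  have h2 : MeasurePreserving
      (MeasurableEquiv.prodAssoc.symm : ℝ × ℝ × ℝ × ℝ ≃ᵐ (ℝ × ℝ) × ℝ × ℝ)
      ((volume : Measure ℝ).prod ((volume : Measure ℝ).prod ((volume : Measure ℝ).prod (volume : Measure ℝ))))
      (((volume : Measure ℝ).prod (volume : Measure ℝ)).prod ((volume : Measure ℝ).prod (volume : Measure ℝ))) :=
    (measurePreserving_prodAssoc _ _ _).symm _
  have h3 : MeasurePreserving (Prod.map (Prod.swap : ℝ × ℝ → ℝ × ℝ) (id : ℝ × ℝ → ℝ × ℝ))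
      (((volume : Measure ℝ).prod (volume : Measure ℝ)).prod ((volume : Measure ℝ).prod (volume : Measure ℝ)))
      (((volume : Measure ℝ).prod (volume : Measure ℝ)).prod ((volume : Measure ℝ).prod (volume : Measure ℝ))) :=
    Measure.measurePreserving_swap.prod (MeasurePreserving.id _)
  have h4 := measurePreserving_prodAssoc (volume : Measure ℝ) (volume : Measure ℝ)
      ((volume : Measure ℝ).prod (volume : Measure ℝ))
  have comp := ((h4.comp h3).comp h2).comp h1
  have heq : myperm = (MeasurableEquiv.prodAssoc ∘ (Prod.map Prod.swap id) ∘
      (MeasurableEquiv.prodAssoc.symm : ℝ × ℝ × ℝ × ℝ ≃ᵐ (ℝ × ℝ) × ℝ × ℝ) ∘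
      (Prod.map (id : ℝ → ℝ) ((MeasurableEquiv.prodAssoc : (ℝ × ℝ) × ℝ ≃ᵐ ℝ × ℝ × ℝ) ∘ Prod.swap))) := by
    funext q
    simp [myperm, MeasurableEquiv.prodAssoc, Equiv.prodAssoc, Prod.map]
  rw [heq]
  have vol4 : (volume : Measure (ℝ × ℝ × ℝ × ℝ)) =
      ((volume : Measure ℝ).prod ((volume : Measure ℝ).prod ((volume : Measure ℝ).prod (volume : Measure ℝ)))) := by
    rw [Measure.volume_eq_prod, Measure.volume_eq_prod, Measure.volume_eq_prod]
  rw [vol4]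
  exact comp

lemma lint_Ioc {l u : ℝ} (h : l ≤ u) {φ : ℝ → ℝ} (hc : Continuous φ)
    (hφ : ∀ x ∈ Set.Ioc l u, 0 ≤ φ x) :
    ∫⁻ x in Set.Ioc l u, ENNReal.ofReal (φ x) = ENNReal.ofReal (∫ x in l..u, φ x) := by
  rw [intervalIntegral.integral_of_le h]
  rw [ofReal_integral_eq_lintegral_ofReal]
  · exact (hc.integrableOn_Ioc)
  · filter_upwards [ae_restrict_mem measurableSet_Ioc] with x hx using hφ x hx

lemma int_poly (u A B C : ℝ) :
    ∫ x in (0:ℝ)..u, (A + B*x + C*x^2) = A*u + B*u^2/2 + C*u^3/3 := by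
  have iA : IntervalIntegrable (fun _ : ℝ => A) volume 0 u := intervalIntegrable_const
  have iB : IntervalIntegrable (fun x : ℝ => B*x) volume 0 u :=
    (continuous_const.mul continuous_id).intervalIntegrable 0 u
  have iC : IntervalIntegrable (fun x : ℝ => C*x^2) volume 0 u :=
    (continuous_const.mul (continuous_pow 2)).intervalIntegrable 0 u
  rw [intervalIntegral.integral_add (iA.add iB) iC, intervalIntegral.integral_add iA iB,
    intervalIntegral.integral_const, intervalIntegral.integral_const_mul,
    intervalIntegral.integral_const_mul, integral_id, integral_pow]
  simp
  ring

noncomputable def cfun (ε b α : ℝ) : ℕ → ℝ≥0∞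
  | 0 => ENNReal.ofReal (1 - ε*(b+α))
  | (n+1) => ENNReal.ofReal (b^(n+1)/(n+2))

noncomputable def dfun (ε b : ℝ) : ℕ → ℝ≥0∞
  | 0 => ENNReal.ofReal ((1-ε*b)*(1-b) - ε*(1-b)^2/2)
  | (n+1) => ENNReal.ofReal (b^(n+1)*(1-b)/(n+2))

noncomputable def Ifun (ε : ℝ) : ℕ → ℝ≥0∞
  | 0 => ENNReal.ofReal (1/2 - ε/3)
  | (n+1) => ENNReal.ofReal (1/((n+2)^2*(n+3)))

lemma L1 {ε b α : ℝ} (hε0 : 0 < ε) (hε1 : ε < 1) (hb0 : 0 < b) (hb1 : b ≤ 1)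
    (hα0 : 0 < α) (hα1 : α ≤ 1 - b) :
    ∫⁻ a in Set.Ioc (1-b) 1, ENNReal.ofReal ((a⁻¹ - ε*(b+α))/b)
      = ∑' n : ℕ, cfun ε b α n := by
  set f : ℕ → ℝ → ℝ := fun n a => Nat.rec ((1 - ε*(b+α))/b) (fun m _ => (1-a)^(m+1)/b) n
    with hf
  have hf0 : ∀ a, f 0 a = (1 - ε*(b+α))/b := fun _ => rfl
  have hfs : ∀ n a, f (n+1) a = (1-a)^(n+1)/b := fun _ _ => rfl
  have hba : ε * (b + α) < 1 := by nlinarith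
  have key : ∀ a ∈ Set.Ioc (1-b) 1,
      ENNReal.ofReal ((a⁻¹ - ε*(b+α))/b) = ∑' n : ℕ, ENNReal.ofReal (f n a) := by
    intro a ha
    obtain ⟨ha1, ha2⟩ := ha
    have ha0 : 0 < a := by linarith
    have geo : HasSum (fun n : ℕ => (1-a)^n) a⁻¹ := by
      have := hasSum_geometric_of_lt_one (by linarith : (0:ℝ) ≤ 1 - a) (by linarith : 1 - a < 1)
      rwa [sub_sub_cancel] at this
    have tail : HasSum (fun n : ℕ => f (n+1) a) ((1-a) * (a⁻¹/b)) := by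
      have := (geo.div_const b).mul_left (1-a)
      have e : (fun n : ℕ => f (n+1) a) = fun i => (1-a) * ((1-a)^i / b) := by
        funext n
        rw [hfs]
        ring
      rw [e]; exact this
    have hsum : HasSum (fun n => f n a) ((a⁻¹ - ε*(b+α))/b) := by
      have h2 := (hasSum_nat_add_iff (f := fun n => f n a) 1).mp tail
      simp only [Finset.range_one, Finset.sum_singleton, hf0] at h2
      have heq : (1-a) * (a⁻¹/b) + (1 - ε*(b+α))/b = (a⁻¹ - ε*(b+α))/b := by
        field_simp
        ring
      rwa [heq] at h2
    have hnn : ∀ n, 0 ≤ f n a := by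
      intro n
      cases n with
      | zero => exact div_nonneg (by linarith) hb0.le
      | succ m => exact div_nonneg (pow_nonneg (by linarith) _) hb0.le
    rw [← hsum.tsum_eq, ENNReal.ofReal_tsum_of_nonneg hnn hsum.summable]
  rw [setLIntegral_congr_fun measurableSet_Ioc key]
  rw [lintegral_tsum]
  · congr 1
    funext n
    cases n with
    | zero =>
        simp only [hf0, cfun]
        rw [setLIntegral_const, Real.volume_Ioc, ← ENNReal.ofReal_mul
          (div_nonneg (by linarith) hb0.le)]
        congr 1
        have hbb : (1:ℝ) - (1-b) = b := by ring
        rw [hbb, div_mul_cancel₀ _ hb0.ne']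
    | succ n =>
        simp only [hfs, cfun]
        rw [lint_Ioc (l := 1-b) (u := 1) (φ := fun x => (1-x)^(n+1)/b) (by linarith)
          (by fun_prop)
          (fun x hx => div_nonneg (pow_nonneg (by linarith [hx.2]) _) hb0.le)]
        congr 1
        rw [intervalIntegral.integral_div]
        have hcomp := intervalIntegral.integral_comp_sub_left (a := 1-b) (b := (1:ℝ))
          (fun x => x^(n+1)) 1
        rw [hcomp]
        norm_num [integral_pow]
        rw [pow_succ]
        field_simp
        ring
  · intro n
    cases n with
    | zero =>
        show AEMeasurable (fun _ : ℝ => ENNReal.ofReal ((1 - ε*(b+α))/b)) _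
        exact aemeasurable_const
    | succ m =>
        exact (ENNReal.measurable_ofReal.comp
          (((continuous_const.sub continuous_id).pow _).div_const b).measurable).aemeasurable

lemma L2 {ε b : ℝ} (hε0 : 0 < ε) (hε1 : ε < 1) (hb0 : 0 < b) (hb1 : b ≤ 1) :
    ∫⁻ α in Set.Ioc 0 (1-b), ∑' n : ℕ, cfun ε b α n = ∑' n : ℕ, dfun ε b n := by
  have hpt : ∀ α, (∑' n : ℕ, cfun ε b α n) = ∑' n : ℕ, (fun n α => cfun ε b α n) n α := by
    intro α; rfl
  rw [lintegral_congr (fun α => hpt α), lintegral_tsum]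
  · congr 1
    funext n
    cases n with
    | zero =>
        simp only [cfun, dfun]
        rw [lint_Ioc (l := 0) (u := 1-b) (φ := fun α => 1 - ε*(b+α)) (by linarith)
          (by fun_prop) (fun x hx => by nlinarith [hx.1, hx.2, mul_nonneg hε0.le (by linarith [hx.2] : (0:ℝ) ≤ 1 - (b+x))])]
        congr 1
        rw [intervalIntegral.integral_congr
          (g := fun x => (1 - ε*b) + (-ε)*x + 0*x^2) (fun x _ => by ring), int_poly]
        ring
    | succ n =>
        simp only [cfun, dfun]
        rw [setLIntegral_const, Real.volume_Ioc, sub_zero,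
          ← ENNReal.ofReal_mul (by positivity)]
        congr 1
        ring
  · intro n
    cases n with
    | zero =>
        show AEMeasurable (fun α : ℝ => ENNReal.ofReal (1 - ε*(b+α))) _
        exact (ENNReal.measurable_ofReal.comp (by fun_prop)).aemeasurable
    | succ m =>
        show AEMeasurable (fun _ : ℝ => ENNReal.ofReal (b^(m+1)/(m+2))) _
        exact aemeasurable_const

lemma L3 {ε : ℝ} (hε0 : 0 < ε) (hε1 : ε < 1) :
    ∫⁻ b in Set.Ioc (0:ℝ) 1, ∑' n : ℕ, dfun ε b n = ∑' n : ℕ, Ifun ε n := by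
  have hpt : ∀ b, (∑' n : ℕ, dfun ε b n) = ∑' n : ℕ, (fun n b => dfun ε b n) n b := fun _ => rfl
  rw [lintegral_congr (fun b => hpt b), lintegral_tsum]
  · congr 1
    funext n
    cases n with
    | zero =>
        simp only [dfun, Ifun]
        rw [lint_Ioc (l := 0) (u := 1) (φ := fun b => (1-ε*b)*(1-b) - ε*(1-b)^2/2)
          (by norm_num) (by fun_prop) (fun x hx => by nlinarith [hx.1, hx.2, mul_nonneg (mul_nonneg hε0.le hx.1.le) (by linarith [hx.2] : (0:ℝ) ≤ 1 - x), mul_nonneg hε0.le (sq_nonneg (1-x))])]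
        congr 1
        rw [intervalIntegral.integral_congr
          (g := fun x => (1 - ε/2) + (-1)*x + (ε/2)*x^2) (fun x _ => by ring), int_poly]
        ring
    | succ n =>
        simp only [dfun, Ifun]
        rw [lint_Ioc (l := 0) (u := 1) (φ := fun b => b^(n+1)*(1-b)/(n+2))
          (by norm_num) (by fun_prop) (fun x hx => by
            exact div_nonneg (mul_nonneg (pow_nonneg hx.1.le _) (by linarith [hx.2]))
              (by positivity))]
        congr 1
        rw [intervalIntegral.integral_div]
        rw [intervalIntegral.integral_congr
          (g := fun x : ℝ => x^(n+1) - x^(n+2)) (fun x _ => by ring)]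
        rw [intervalIntegral.integral_sub ((continuous_pow _).intervalIntegrable 0 1)
          ((continuous_pow _).intervalIntegrable 0 1), integral_pow, integral_pow]
        push_cast
        norm_num
        field_simp
        ring
  · intro n
    cases n with
    | zero =>
        show AEMeasurable (fun b : ℝ => ENNReal.ofReal ((1-ε*b)*(1-b) - ε*(1-b)^2/2)) _
        exact (ENNReal.measurable_ofReal.comp (by fun_prop)).aemeasurable
    | succ m =>
        show AEMeasurable (fun b : ℝ => ENNReal.ofReal (b^(m+1)*(1-b)/(m+2))) _
        exact (ENNReal.measurable_ofReal.comp (by fun_prop)).aemeasurable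

lemma tail2 : HasSum (fun n : ℕ => 1/((n:ℝ)+2)^2) (Real.pi^2/6 - 1) := by
  have h2 : HasSum (fun n : ℕ => 1/((↑(n+2):ℝ))^2) (Real.pi^2/6 - 1) := by
    rw [hasSum_nat_add_iff (f := fun n : ℕ => 1/((n:ℝ))^2) 2]
    norm_num [Finset.sum_range_succ]
    simpa [one_div] using hasSum_zeta_two
  convert h2 using 2 with n
  push_cast
  ring

lemma tele : HasSum (fun n : ℕ => 1/(((n:ℝ)+2)*((n:ℝ)+3))) (1/2) := by
  rw [hasSum_iff_tendsto_nat_of_nonneg (fun i => by positivity)]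
  have hform : ∀ N : ℕ, ∑ i ∈ Finset.range N, 1/(((i:ℝ)+2)*((i:ℝ)+3))
      = 1/2 - 1/((N:ℝ)+2) := by
    intro N
    calc ∑ i ∈ Finset.range N, 1/(((i:ℝ)+2)*((i:ℝ)+3))
        = ∑ i ∈ Finset.range N, ((fun j : ℕ => 1/((j:ℝ)+2)) i - (fun j : ℕ => 1/((j:ℝ)+2)) (i+1)) := by
          refine Finset.sum_congr rfl (fun i _ => ?_)
          push_cast
          rw [div_sub_div _ _ (by positivity) (by positivity)]
          ring_nf
      _ = (fun j : ℕ => 1/((j:ℝ)+2)) 0 - (fun j : ℕ => 1/((j:ℝ)+2)) N :=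
          Finset.sum_range_sub' _ _
      _ = 1/2 - 1/((N:ℝ)+2) := by norm_num
  simp only [hform]
  have h0 : Filter.Tendsto (fun N : ℕ => 1/((N:ℝ)+2)) Filter.atTop (nhds 0) := by
    have h := (tendsto_one_div_add_atTop_nhds_zero_nat (𝕜 := ℝ)).comp (Filter.tendsto_add_atTop_nat 1)
    refine h.congr (fun n => ?_)
    simp [Function.comp]
    ring_nf
  have h2 := Filter.Tendsto.sub (tendsto_const_nhds (x := (1:ℝ)/2)) h0
  simpa using h2

lemma sum_u : HasSum (fun n : ℕ => 1/(((n:ℝ)+2)^2*((n:ℝ)+3))) (Real.pi^2/6 - 3/2) := by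
  have h := tail2.sub tele
  have h32 : Real.pi^2/6 - 3/2 = (Real.pi^2/6 - 1) - 1/2 := by ring
  rw [h32]
  have heq : (fun n : ℕ => 1/((n:ℝ)+2)^2 - 1/(((n:ℝ)+2)*((n:ℝ)+3)))
      = fun n : ℕ => 1/(((n:ℝ)+2)^2*((n:ℝ)+3)) := by
    funext n
    rw [div_sub_div _ _ (by positivity) (by positivity)]
    rw [div_eq_div_iff (by positivity) (by positivity)]
    ring
  rwa [heq] at h

lemma L4 {ε : ℝ} (hε0 : 0 < ε) (hε1 : ε < 1) :
    ∑' n : ℕ, Ifun ε n = ENNReal.ofReal (Real.pi^2/6 - 1 - ε/3) := by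
  rw [tsum_eq_zero_add' (f := Ifun ε) ENNReal.summable]
  have h1 : ∑' n : ℕ, Ifun ε (n+1) = ENNReal.ofReal (Real.pi^2/6 - 3/2) := by
    have hpt : ∀ n : ℕ, Ifun ε (n+1) = ENNReal.ofReal (1/(((n:ℝ)+2)^2*((n:ℝ)+3))) :=
      fun n => rfl
    simp only [hpt]
    rw [← ENNReal.ofReal_tsum_of_nonneg (fun n => by positivity) sum_u.summable,
      sum_u.tsum_eq]
  rw [h1]
  have h0 : Ifun ε 0 = ENNReal.ofReal (1/2 - ε/3) := rfl
  rw [h0]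
  rw [← ENNReal.ofReal_add (by linarith) (by nlinarith [Real.pi_gt_three])]
  congr 1
  ring

/-- Support at zero: for ε ∈ (0,1) the set of parameters (a,b,s,α) in Ω₃ with
return time less than ε has Lebesgue measure at least π²/6 - 1 - ε/3,
which exceeds π²/6 - 1 - 1/3 > 0. -/
theorem support_at_zero (ε : ℝ) (hε0 : 0 < ε) (hε1 : ε < 1) :
    ENNReal.ofReal (Real.pi ^ 2 / 6 - 1 - ε / 3) ≤
      volume {p : ℝ × ℝ × ℝ × ℝ |
        0 < p.2.1 ∧ p.2.1 ≤ 1 ∧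
        0 < p.2.2.2 ∧ p.2.2.2 ≤ 1 - p.2.1 ∧
        1 - p.2.1 ≤ p.1 ∧ p.1 ≤ 1 ∧
        0 ≤ p.2.2.1 ∧ p.2.2.1 < (p.1⁻¹ - ε * (p.2.1 + p.2.2.2)) / p.2.1} ∧
    Real.pi ^ 2 / 6 - 1 - 1 / 3 < Real.pi ^ 2 / 6 - 1 - ε / 3 ∧
    (0 : ℝ) < Real.pi ^ 2 / 6 - 1 - 1 / 3 := by
  have hπ := Real.pi_gt_three
  refine ⟨?_, by linarith, by nlinarith⟩
  set S : Set (ℝ × ℝ × ℝ × ℝ) := {p : ℝ × ℝ × ℝ × ℝ |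
        0 < p.2.1 ∧ p.2.1 ≤ 1 ∧
        0 < p.2.2.2 ∧ p.2.2.2 ≤ 1 - p.2.1 ∧
        1 - p.2.1 ≤ p.1 ∧ p.1 ≤ 1 ∧
        0 ≤ p.2.2.1 ∧ p.2.2.1 < (p.1⁻¹ - ε * (p.2.1 + p.2.2.2)) / p.2.1} with hSdef
  have hS : MeasurableSet S := by
    have m1 : Measurable fun p : ℝ × ℝ × ℝ × ℝ => p.1 := measurable_fst
    have m2 : Measurable fun p : ℝ × ℝ × ℝ × ℝ => p.2.1 := measurable_fst.comp measurable_snd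
    have m3 : Measurable fun p : ℝ × ℝ × ℝ × ℝ => p.2.2.1 :=
      measurable_fst.comp (measurable_snd.comp measurable_snd)
    have m4 : Measurable fun p : ℝ × ℝ × ℝ × ℝ => p.2.2.2 :=
      measurable_snd.comp (measurable_snd.comp measurable_snd)
    have hbig : Measurable fun p : ℝ × ℝ × ℝ × ℝ =>
        (p.1⁻¹ - ε * (p.2.1 + p.2.2.2)) / p.2.1 :=
      ((m1.inv.sub ((measurable_const (a := ε)).mul (m2.add m4)))).div m2
    exact (measurableSet_lt measurable_const m2).inter
      ((measurableSet_le m2 measurable_const).inter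
      ((measurableSet_lt measurable_const m4).inter
      ((measurableSet_le m4 ((measurable_const (a := (1:ℝ))).sub m2)).inter
      ((measurableSet_le ((measurable_const (a := (1:ℝ))).sub m2) m1).inter
      ((measurableSet_le m1 measurable_const).inter
      ((measurableSet_le measurable_const m3).inter
      (measurableSet_lt m3 hbig)))))))
  have hpre : myperm ⁻¹' S = {q : ℝ × ℝ × ℝ × ℝ |
      0 < q.1 ∧ q.1 ≤ 1 ∧ 0 < q.2.1 ∧ q.2.1 ≤ 1 - q.1 ∧
      1 - q.1 ≤ q.2.2.1 ∧ q.2.2.1 ≤ 1 ∧ 0 ≤ q.2.2.2 ∧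
      q.2.2.2 < (q.2.2.1⁻¹ - ε * (q.1 + q.2.1)) / q.1} := rfl
  set T : Set (ℝ × ℝ × ℝ × ℝ) := {q : ℝ × ℝ × ℝ × ℝ |
      0 < q.1 ∧ q.1 ≤ 1 ∧ 0 < q.2.1 ∧ q.2.1 ≤ 1 - q.1 ∧
      1 - q.1 ≤ q.2.2.1 ∧ q.2.2.1 ≤ 1 ∧ 0 ≤ q.2.2.2 ∧
      q.2.2.2 < (q.2.2.1⁻¹ - ε * (q.1 + q.2.1)) / q.1} with hTdef
  have hT : MeasurableSet T := by
    rw [← hpre]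
    exact myperm_mp.measurable hS
  have hvolTS : volume T = volume S := by
    rw [← hpre]
    exact myperm_mp.measure_preimage hS.nullMeasurableSet
  rw [← hvolTS]
  -- innermost slice computation
  have slice3 : ∀ b ∈ Set.Ioc (0:ℝ) 1, ∀ α ∈ Set.Ioc (0:ℝ) (1-b), ∀ a ∈ Set.Ioc (1-b) 1,
      (volume (Prod.mk a ⁻¹' (Prod.mk α ⁻¹' (Prod.mk b ⁻¹' T))))
        = ENNReal.ofReal ((a⁻¹ - ε*(b+α))/b) := by
    intro b hb α hα a ha
    have hset : Prod.mk a ⁻¹' (Prod.mk α ⁻¹' (Prod.mk b ⁻¹' T))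
        = Set.Ico 0 ((a⁻¹ - ε*(b+α))/b) := by
      ext s
      simp only [Set.mem_preimage, hTdef, Set.mem_setOf_eq, Set.mem_Ico]
      constructor
      · rintro ⟨-, -, -, -, -, -, h7, h8⟩
        exact ⟨h7, h8⟩
      · rintro ⟨h7, h8⟩
        exact ⟨hb.1, hb.2, hα.1, hα.2, le_of_lt ha.1, ha.2, h7, h8⟩
    rw [hset, Real.volume_Ico, sub_zero]
  have slice2 : ∀ b ∈ Set.Ioc (0:ℝ) 1, ∀ α ∈ Set.Ioc (0:ℝ) (1-b),
      (∑' n : ℕ, cfun ε b α n) ≤ volume (Prod.mk α ⁻¹' (Prod.mk b ⁻¹' T)) := by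
    intro b hb α hα
    have hTbα : MeasurableSet (Prod.mk α ⁻¹' (Prod.mk b ⁻¹' T)) :=
      (hT.preimage measurable_prodMk_left).preimage measurable_prodMk_left
    rw [← L1 hε0 hε1 hb.1 hb.2 hα.1 hα.2]
    calc ∫⁻ a in Set.Ioc (1-b) 1, ENNReal.ofReal ((a⁻¹ - ε*(b+α))/b)
        = ∫⁻ a in Set.Ioc (1-b) 1, volume (Prod.mk a ⁻¹' (Prod.mk α ⁻¹' (Prod.mk b ⁻¹' T))) :=
          setLIntegral_congr_fun measurableSet_Ioc
            (fun a ha => (slice3 b hb α hα a ha).symm)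
      _ ≤ ∫⁻ a, volume (Prod.mk a ⁻¹' (Prod.mk α ⁻¹' (Prod.mk b ⁻¹' T))) :=
          setLIntegral_le_lintegral _ _
      _ = volume (Prod.mk α ⁻¹' (Prod.mk b ⁻¹' T)) := by
          have hp := Measure.prod_apply (μ := (volume : Measure ℝ))
            (ν := (volume : Measure ℝ)) hTbα
          rw [← Measure.volume_eq_prod] at hp
          exact hp.symm
  have slice1 : ∀ b ∈ Set.Ioc (0:ℝ) 1,
      (∑' n : ℕ, dfun ε b n) ≤ volume (Prod.mk b ⁻¹' T) := by
    intro b hb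
    have hTb : MeasurableSet (Prod.mk b ⁻¹' T) := hT.preimage measurable_prodMk_left
    rw [← L2 hε0 hε1 hb.1 hb.2]
    calc ∫⁻ α in Set.Ioc 0 (1-b), ∑' n : ℕ, cfun ε b α n
        ≤ ∫⁻ α in Set.Ioc 0 (1-b), volume (Prod.mk α ⁻¹' (Prod.mk b ⁻¹' T)) :=
          setLIntegral_mono' measurableSet_Ioc (fun α hα => slice2 b hb α hα)
      _ ≤ ∫⁻ α, volume (Prod.mk α ⁻¹' (Prod.mk b ⁻¹' T)) := setLIntegral_le_lintegral _ _
      _ = volume (Prod.mk b ⁻¹' T) := by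
          have hp := Measure.prod_apply (μ := (volume : Measure ℝ))
            (ν := (volume : Measure (ℝ × ℝ))) hTb
          rw [← Measure.volume_eq_prod] at hp
          exact hp.symm
  calc ENNReal.ofReal (Real.pi ^ 2 / 6 - 1 - ε / 3)
      = ∑' n : ℕ, Ifun ε n := (L4 hε0 hε1).symm
    _ = ∫⁻ b in Set.Ioc (0:ℝ) 1, ∑' n : ℕ, dfun ε b n := (L3 hε0 hε1).symm
    _ ≤ ∫⁻ b in Set.Ioc (0:ℝ) 1, volume (Prod.mk b ⁻¹' T) :=
        setLIntegral_mono' measurableSet_Ioc (fun b hb => slice1 b hb)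
    _ ≤ ∫⁻ b, volume (Prod.mk b ⁻¹' T) := setLIntegral_le_lintegral _ _
    _ = volume T := by
        have hp := Measure.prod_apply (μ := (volume : Measure ℝ))
          (ν := (volume : Measure (ℝ × ℝ × ℝ))) hT
        rw [← Measure.volume_eq_prod] at hp
        exact hp.symm
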